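/- For all real s > 1, ∫_s^∞ Q(√γ) dγ ≥ e^{-s/2}/√(2πs). -/

import Mathlib

open MeasureTheory Real

/-- The standard Gaussian tail function `Q(t) = ∫_t^∞ (1/√(2π)) e^{-u²/2} du`. -/
noncomputable def gaussQ (t : ℝ) : ℝ :=
  ∫ u in Set.Ioi t, (1 / Real.sqrt (2 * π)) * Real.exp (-u ^ 2 / 2)

namespace GaussQAux

noncomputable def phi (u : ℝ) : ℝ := (1 / Real.sqrt (2 * π)) * Real.exp (-u ^ 2 / 2)

lemma phi_nonneg (u : ℝ) : 0 ≤ phi u := by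
  unfold phi
  positivity

lemma integrable_phi : Integrable phi := by
  have h := integrable_exp_neg_mul_sq (by norm_num : (0:ℝ) < 1/2)
  have heq : (fun x : ℝ => Real.exp (-(1/2) * x ^ 2)) = fun u => Real.exp (-u ^ 2 / 2) := by
    funext x; ring_nf
  rw [heq] at h
  exact h.const_mul _

lemma continuous_phi : Continuous phi := by
  unfold phi
  continuity

lemma gaussQ_eq (t : ℝ) : gaussQ t = ∫ u in Set.Ioi t, phi u := rfl

lemma gaussQ_nonneg (t : ℝ) : 0 ≤ gaussQ t := by
  rw [gaussQ_eq]
  exact setIntegral_nonneg measurableSet_Ioi fun u _ => phi_nonneg u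

lemma gaussQ_split {a b : ℝ} (h : a ≤ b) :
    gaussQ a = (∫ u in Set.Ioc a b, phi u) + gaussQ b := by
  rw [gaussQ_eq, gaussQ_eq, ← Set.Ioc_union_Ioi_eq_Ioi h,
    setIntegral_union (Set.Ioc_disjoint_Ioi le_rfl) measurableSet_Ioi
      integrable_phi.integrableOn integrable_phi.integrableOn]

lemma gaussQ_antitone : Antitone gaussQ := by
  intro a b h
  rw [gaussQ_split h]
  have : 0 ≤ ∫ u in Set.Ioc a b, phi u :=
    setIntegral_nonneg measurableSet_Ioc fun u _ => phi_nonneg u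
  linarith

lemma hasDerivAt_gaussQ (t : ℝ) : HasDerivAt gaussQ (-phi t) t := by
  have hrep : ∀ x, gaussQ x = gaussQ t - ∫ u in t..x, phi u := by
    intro x
    rcases le_total t x with h | h
    · rw [intervalIntegral.integral_of_le h]
      have := gaussQ_split h
      linarith
    · rw [intervalIntegral.integral_symm, intervalIntegral.integral_of_le h]
      have := gaussQ_split h
      linarith
  have hint : HasDerivAt (fun x => ∫ u in t..x, phi u) (phi t) t := by
    exact intervalIntegral.integral_hasDerivAt_right
      integrable_phi.intervalIntegrable
      (continuous_phi.stronglyMeasurableAtFilter _ _)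
      continuous_phi.continuousAt
  have := (hasDerivAt_const t (gaussQ t)).sub hint
  simpa [← hrep, zero_sub, Pi.sub_def] using this

lemma mills {t : ℝ} (ht : 0 < t) :
    gaussQ t ≤ (1 / Real.sqrt (2 * π)) * Real.exp (-t ^ 2 / 2) / t := by
  have key : ∫ u in Set.Ioi t, u * Real.exp (-u ^ 2 / 2) = Real.exp (-t ^ 2 / 2) := by
    have hint : IntegrableOn (fun u : ℝ => u * Real.exp (-u ^ 2 / 2)) (Set.Ioi t) := by
      have h := integrable_mul_exp_neg_mul_sq (by norm_num : (0:ℝ) < 1/2)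
      have heq : (fun x : ℝ => x * Real.exp (-(1/2) * x ^ 2)) = fun u => u * Real.exp (-u ^ 2 / 2) := by
        funext x; ring_nf
      rw [heq] at h
      exact h.integrableOn
    have hderiv : ∀ x ∈ Set.Ici t, HasDerivAt (fun u : ℝ => -Real.exp (-u ^ 2 / 2))
        (x * Real.exp (-x ^ 2 / 2)) x := by
      intro x _
      have h1 : HasDerivAt (fun u : ℝ => -u ^ 2 / 2) (-x) x := by
        have := ((hasDerivAt_pow 2 x).neg).div_const 2
        simpa using this.congr_deriv (by ring)
      have := (h1.exp).neg
      simpa [mul_comm, Pi.neg_def] using this.congr_deriv (by ring)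
    have htend : Filter.Tendsto (fun u : ℝ => -Real.exp (-u ^ 2 / 2)) Filter.atTop (nhds 0) := by
      rw [← neg_zero]
      apply Filter.Tendsto.neg
      apply Real.tendsto_exp_atBot.comp
      have : Filter.Tendsto (fun u : ℝ => u ^ 2 / 2) Filter.atTop Filter.atTop :=
        (Filter.tendsto_pow_atTop (by norm_num)).atTop_div_const (by norm_num)
      have h2 := Filter.tendsto_neg_atTop_atBot.comp this
      refine h2.congr fun x => ?_
      simp [Function.comp, neg_div]
    have := integral_Ioi_of_hasDerivAt_of_tendsto' hderiv hint htend
    rw [this]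
    simp
  have hmono : gaussQ t ≤ ∫ u in Set.Ioi t,
      (1 / Real.sqrt (2 * π)) / t * (u * Real.exp (-u ^ 2 / 2)) := by
    rw [gaussQ_eq]
    apply setIntegral_mono_on integrable_phi.integrableOn
    · have h := integrable_mul_exp_neg_mul_sq (by norm_num : (0:ℝ) < 1/2)
      have heq : (fun x : ℝ => x * Real.exp (-(1/2) * x ^ 2)) = fun u => u * Real.exp (-u ^ 2 / 2) := by
        funext x; ring_nf
      rw [heq] at h
      exact (h.const_mul _).integrableOn
    · exact measurableSet_Ioi
    · intro u hu
      have hu' : t ≤ u := le_of_lt hu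
      have h1 : (1:ℝ) ≤ u / t := (one_le_div ht).mpr hu'
      have hsq : Real.sqrt (2 * π) ≠ 0 :=
        ne_of_gt (Real.sqrt_pos.mpr (by positivity))
      calc phi u ≤ (u / t) * phi u := le_mul_of_one_le_left (phi_nonneg u) h1
        _ = (1 / Real.sqrt (2 * π)) / t * (u * Real.exp (-u ^ 2 / 2)) := by
            unfold phi; ring
  calc gaussQ t ≤ _ := hmono
    _ = (1 / Real.sqrt (2 * π)) / t * Real.exp (-t ^ 2 / 2) := by
        rw [integral_const_mul, key]
    _ = (1 / Real.sqrt (2 * π)) * Real.exp (-t ^ 2 / 2) / t := by ring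

end GaussQAux

open GaussQAux in
theorem integral_gaussQ_sqrt_ge (s : ℝ) (hs : 1 < s) :
    ∫ γ in Set.Ioi s, gaussQ (Real.sqrt γ) ≥ Real.exp (-s / 2) / Real.sqrt (2 * π * s) := by
  have hs0 : 0 < s := lt_trans one_pos hs
  set c : ℝ := 1 / Real.sqrt (2 * π) with hc
  have hcpos : 0 < c := by
    rw [hc]; positivity
  set G : ℝ → ℝ := fun x => c * (Real.sqrt x * Real.exp (-x / 2))
      + (1 - x) * gaussQ (Real.sqrt x) with hG
  -- pointwise Mills-type bound
  have hQb : ∀ x : ℝ, 1 ≤ x → gaussQ (Real.sqrt x) ≤ c * Real.exp (-x / 2) := by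
    intro x hx
    have hx0 : 0 < x := lt_of_lt_of_le one_pos hx
    have ht0 : 0 < Real.sqrt x := Real.sqrt_pos.mpr hx0
    have ht1 : 1 ≤ Real.sqrt x := by
      rw [show (1:ℝ) = Real.sqrt 1 by simp]
      exact Real.sqrt_le_sqrt hx
    have h := mills ht0
    rw [Real.sq_sqrt hx0.le] at h
    calc gaussQ (Real.sqrt x) ≤ c * Real.exp (-x / 2) / Real.sqrt x := h
      _ ≤ c * Real.exp (-x / 2) / 1 := by
          apply div_le_div_of_nonneg_left _ one_pos ht1
          positivity
      _ = c * Real.exp (-x / 2) := by ring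
  -- integrability
  have hQint : IntegrableOn (fun γ => gaussQ (Real.sqrt γ)) (Set.Ioi s) := by
    have hmeas : Measurable (fun γ => gaussQ (Real.sqrt γ)) := by
      apply Antitone.measurable
      exact gaussQ_antitone.comp_monotone fun a b h => Real.sqrt_le_sqrt h
    have hgint : IntegrableOn (fun γ : ℝ => c * Real.exp (-(1/2) * γ)) (Set.Ioi s) :=
      (exp_neg_integrableOn_Ioi s (by norm_num : (0:ℝ) < 1/2)).const_mul c
    apply Integrable.mono hgint (hmeas.aestronglyMeasurable.restrict)
    rw [MeasureTheory.ae_restrict_iff' measurableSet_Ioi]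
    filter_upwards with γ hγ
    have hγ1 : 1 ≤ γ := le_of_lt (lt_trans hs hγ)
    rw [Real.norm_of_nonneg (gaussQ_nonneg _), Real.norm_of_nonneg (by positivity)]
    calc gaussQ (Real.sqrt γ) ≤ c * Real.exp (-γ / 2) := hQb γ hγ1
      _ = c * Real.exp (-(1/2) * γ) := by ring_nf
  -- derivative
  have hderiv : ∀ x ∈ Set.Ici s, HasDerivAt G (-gaussQ (Real.sqrt x)) x := by
    intro x hx
    have hx0 : 0 < x := lt_of_lt_of_le hs0 hx
    have hsx : Real.sqrt x ≠ 0 := ne_of_gt (Real.sqrt_pos.mpr hx0)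
    have hsqrt := Real.hasDerivAt_sqrt (ne_of_gt hx0)
    have hQ : HasDerivAt (fun y => gaussQ (Real.sqrt y))
        (-phi (Real.sqrt x) * (1 / (2 * Real.sqrt x))) x := by
      simpa [Function.comp_def] using (hasDerivAt_gaussQ (Real.sqrt x)).comp x hsqrt
    have hexp : HasDerivAt (fun y : ℝ => Real.exp (-y / 2)) (Real.exp (-x / 2) * (-1/2)) x := by
      have h := (((hasDerivAt_id x).neg).div_const 2).exp
      simpa [neg_div] using h
    have h1 := hsqrt.mul hexp
    have h2 : HasDerivAt (fun y : ℝ => 1 - y) (-1) x := by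
      simpa using (hasDerivAt_id x).const_sub 1
    have h4 := (h1.const_mul c).add (h2.mul hQ)
    refine h4.congr_deriv ?_
    symm
    unfold phi
    have htx : x = Real.sqrt x ^ 2 := (Real.sq_sqrt hx0.le).symm
    set t := Real.sqrt x with hts
    rw [htx, ← hc]
    have ht0' : t ≠ 0 := hsx
    field_simp
    ring
  -- limit at infinity
  have htend : Filter.Tendsto G Filter.atTop (nhds 0) := by
    have h0 : Filter.Tendsto (fun y : ℝ => y * Real.exp (-y)) Filter.atTop (nhds 0) := by
      simpa using tendsto_pow_mul_exp_neg_atTop_nhds_zero 1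
    have hhalf : Filter.Tendsto (fun x : ℝ => x / 2) Filter.atTop Filter.atTop :=
      Filter.tendsto_id.atTop_div_const (by norm_num)
    have h1 := (h0.comp hhalf).const_mul (4 * c)
    rw [mul_zero] at h1
    apply squeeze_zero_norm' _ h1
    filter_upwards [Filter.eventually_ge_atTop (1:ℝ)] with x hx
    have hx0 : 0 < x := lt_of_lt_of_le one_pos hx
    have hsle : Real.sqrt x ≤ x := by
      have h := Real.sqrt_le_sqrt (show x ≤ x ^ 2 by nlinarith)
      rwa [Real.sqrt_sq hx0.le] at h
    have hb := hQb x hx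
    have hQn := gaussQ_nonneg (Real.sqrt x)
    have hexp0 : 0 < Real.exp (-x / 2) := Real.exp_pos _
    have hcomp : (4 * c) * ((fun y : ℝ => y * Real.exp (-y)) ∘ (fun x : ℝ => x / 2)) x
        = 2 * c * (x * Real.exp (-x / 2)) := by
      simp only [Function.comp_apply]
      rw [← neg_div]
      ring
    rw [hcomp, hG]
    simp only []
    calc ‖c * (Real.sqrt x * Real.exp (-x / 2)) + (1 - x) * gaussQ (Real.sqrt x)‖
        ≤ ‖c * (Real.sqrt x * Real.exp (-x / 2))‖ + ‖(1 - x) * gaussQ (Real.sqrt x)‖ :=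
          norm_add_le _ _
      _ = c * (Real.sqrt x * Real.exp (-x / 2)) + (x - 1) * gaussQ (Real.sqrt x) := by
          rw [Real.norm_of_nonneg (by positivity), norm_mul,
            Real.norm_of_nonneg hQn, Real.norm_eq_abs, abs_of_nonpos (by linarith), neg_sub]
      _ ≤ 2 * c * (x * Real.exp (-x / 2)) := by
          nlinarith [mul_le_mul_of_nonneg_left hb (by linarith : (0:ℝ) ≤ x - 1),
            mul_le_mul_of_nonneg_left hsle (mul_nonneg hcpos.le hexp0.le)]
  have key := integral_Ioi_of_hasDerivAt_of_tendsto' hderiv hQint.neg htend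
  rw [MeasureTheory.integral_neg] at key
  have hint_eq : ∫ γ in Set.Ioi s, gaussQ (Real.sqrt γ) = G s := by linarith
  rw [hint_eq, ge_iff_le]
  -- final inequality
  have ht0 : 0 < Real.sqrt s := Real.sqrt_pos.mpr hs0
  have ht2 : Real.sqrt s ^ 2 = s := Real.sq_sqrt hs0.le
  have hmills := mills ht0
  rw [ht2] at hmills
  have hrhs : Real.exp (-s / 2) / Real.sqrt (2 * π * s)
      = c * Real.exp (-s / 2) / Real.sqrt s := by
    rw [Real.sqrt_mul (by positivity) s, hc]
    field_simp
  rw [hrhs, hG]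
  have h5 : (1 - s) * gaussQ (Real.sqrt s) ≥ (1 - s) * (c * Real.exp (-s / 2) / Real.sqrt s) := by
    apply mul_le_mul_of_nonpos_left hmills (by linarith)
  have h6 : c * (Real.sqrt s * Real.exp (-s / 2)) + (1 - s) * (c * Real.exp (-s / 2) / Real.sqrt s)
      = c * Real.exp (-s / 2) / Real.sqrt s := by
    field_simp
    linear_combination ht2
  simp only []
  linarith
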